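/- Let (X_t)_{t=1}^∞ be a sequence of vectors in ℝ^d with ‖X_t‖₂ ≤ 1 for all t, and let G_t = Σ_{s=1}^t X_s X_sᵀ. Suppose that λ_min(G_d) ≥ 1 (in particular G_t is invertible for all t ≥ d). Then for every n > d, Σ_{t=d+1}^n ‖X_t‖_{G_t⁻¹} ≤ sqrt(2 n d log((d+n)/d)). -/

import Mathlib

open Matrix

section helpers

variable {d : ℕ}

lemma mySum_mulVec {ι : Type*} (S : Finset ι) (M : ι → Matrix (Fin d) (Fin d) ℝ)
    (x : Fin d → ℝ) : (∑ s ∈ S, M s) *ᵥ x = ∑ s ∈ S, M s *ᵥ x := by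
  ext i
  simp [Matrix.mulVec, dotProduct, Matrix.sum_apply, Finset.sum_mul]
  rw [Finset.sum_comm]

lemma myDot_sum {ι : Type*} (S : Finset ι) (v : ι → (Fin d → ℝ)) (x : Fin d → ℝ) :
    x ⬝ᵥ (∑ s ∈ S, v s) = ∑ s ∈ S, x ⬝ᵥ v s := by
  simp [dotProduct, Finset.mul_sum, Finset.sum_apply]
  rw [Finset.sum_comm]

lemma myVecMulVec_mulVec (u v x : Fin d → ℝ) :
    (vecMulVec u v) *ᵥ x = (v ⬝ᵥ x) • u := by
  ext i
  simp only [Matrix.mulVec, dotProduct, vecMulVec_apply, Pi.smul_apply, smul_eq_mul,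
    Finset.sum_mul, Finset.mul_sum]
  exact Finset.sum_congr rfl fun j _ => by ring

lemma myQuad (u x : Fin d → ℝ) :
    x ⬝ᵥ (vecMulVec u u) *ᵥ x = (u ⬝ᵥ x) ^ 2 := by
  rw [myVecMulVec_mulVec, dotProduct_smul]
  simp [dotProduct, sq, Finset.sum_mul, Finset.mul_sum, mul_comm]

end helpers

/-- The smallest eigenvalue of a symmetric matrix, characterized as the infimum of the
Rayleigh quotient over the Euclidean unit sphere. -/
noncomputable def lambdaMin {d : ℕ} (A : Matrix (Fin d) (Fin d) ℝ) : ℝ :=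
  sInf {r : ℝ | ∃ x : Fin d → ℝ, ∑ i, (x i) ^ 2 = 1 ∧ r = x ⬝ᵥ A.mulVec x}

theorem stmt6 {d : ℕ} (X : ℕ → (Fin d → ℝ))
    (hX : ∀ t : ℕ, Real.sqrt (∑ i, (X t i) ^ 2) ≤ 1)
    (G : ℕ → Matrix (Fin d) (Fin d) ℝ)
    (hGdef : ∀ t : ℕ, G t = ∑ s ∈ Finset.Icc 1 t, Matrix.vecMulVec (X s) (X s))
    (hmin : 1 ≤ lambdaMin (G d)) :
    ∀ n : ℕ, d < n →
      ∑ t ∈ Finset.Icc (d + 1) n, Real.sqrt (X t ⬝ᵥ (G t)⁻¹.mulVec (X t)) ≤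
        Real.sqrt (2 * n * d * Real.log ((d + n : ℝ) / d)) := by
  intro n hn
  -- d is positive, else hmin is contradictory
  rcases Nat.eq_zero_or_pos d with hd0 | hd
  · exfalso
    subst hd0
    have hempty : {r : ℝ | ∃ x : Fin 0 → ℝ, ∑ i, (x i) ^ 2 = 1 ∧ r = x ⬝ᵥ (G 0).mulVec x} = ∅ := by
      ext r; simp
    rw [lambdaMin, hempty, Real.sInf_empty] at hmin
    linarith
  -- quadratic form formula
  have hquad : ∀ (t : ℕ) (x : Fin d → ℝ),
      x ⬝ᵥ (G t).mulVec x = ∑ s ∈ Finset.Icc 1 t, (X s ⬝ᵥ x) ^ 2 := by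
    intro t x
    rw [hGdef, mySum_mulVec, myDot_sum]
    exact Finset.sum_congr rfl fun s _ => myQuad _ _
  -- the quadratic form of G d dominates the euclidean norm
  have hset_bdd : BddBelow {r : ℝ | ∃ x : Fin d → ℝ, ∑ i, (x i) ^ 2 = 1 ∧ r = x ⬝ᵥ (G d).mulVec x} := by
    refine ⟨0, ?_⟩
    rintro r ⟨x, hx1, rfl⟩
    rw [hquad]
    exact Finset.sum_nonneg fun s _ => sq_nonneg _
  have hGd_ge : ∀ x : Fin d → ℝ, (∑ i, x i ^ 2) ≤ x ⬝ᵥ (G d).mulVec x := by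
    intro x
    have hx0 : 0 ≤ ∑ i, x i ^ 2 := Finset.sum_nonneg fun i _ => sq_nonneg _
    rcases eq_or_lt_of_le hx0 with hz | hpos
    · rw [← hz, hquad]
      exact Finset.sum_nonneg fun s _ => sq_nonneg _
    · set c := Real.sqrt (∑ i, x i ^ 2) with hc_def
      have hc : 0 < c := Real.sqrt_pos.2 hpos
      have hc2 : c ^ 2 = ∑ i, x i ^ 2 := Real.sq_sqrt hx0
      set y : Fin d → ℝ := c⁻¹ • x with hy_def
      have hy1 : ∑ i, y i ^ 2 = 1 := by
        simp only [hy_def, Pi.smul_apply, smul_eq_mul, mul_pow, ← Finset.mul_sum]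
        rw [← hc2]
        field_simp
      have hmem : (y ⬝ᵥ (G d).mulVec y) ∈
          {r : ℝ | ∃ x : Fin d → ℝ, ∑ i, (x i) ^ 2 = 1 ∧ r = x ⬝ᵥ (G d).mulVec x} :=
        ⟨y, hy1, rfl⟩
      have h1 : 1 ≤ y ⬝ᵥ (G d).mulVec y := le_trans hmin (csInf_le hset_bdd hmem)
      have hscale : y ⬝ᵥ (G d).mulVec y = c⁻¹ ^ 2 * (x ⬝ᵥ (G d).mulVec x) := by
        rw [hquad, hquad, Finset.mul_sum]
        refine Finset.sum_congr rfl fun s _ => ?_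
        rw [hy_def, dotProduct_smul, smul_eq_mul]
        ring
      rw [hscale] at h1
      have h2 : c ^ 2 ≤ x ⬝ᵥ (G d).mulVec x := by
        have hcc : (0:ℝ) < c ^ 2 := by positivity
        calc c ^ 2 = c ^ 2 * 1 := by ring
          _ ≤ c ^ 2 * (c⁻¹ ^ 2 * (x ⬝ᵥ (G d).mulVec x)) :=
            mul_le_mul_of_nonneg_left h1 (le_of_lt hcc)
          _ = x ⬝ᵥ (G d).mulVec x := by field_simp
      linarith [hc2 ▸ h2]
  -- G t is positive definite for t ≥ d
  have hGherm : ∀ t, (G t).IsHermitian := by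
    intro t
    rw [hGdef]
    show _ = _
    rw [conjTranspose_sum]
    refine Finset.sum_congr rfl fun s _ => ?_
    ext i j
    simp [vecMulVec_apply, mul_comm]
  have hstar : ∀ x : Fin d → ℝ, star x = x := fun x => funext fun i => rfl
  have hmono : ∀ a b : ℕ, a ≤ b → ∀ x : Fin d → ℝ,
      x ⬝ᵥ (G a).mulVec x ≤ x ⬝ᵥ (G b).mulVec x := by
    intro a b hab x
    rw [hquad, hquad]
    exact Finset.sum_le_sum_of_subset_of_nonneg
      (Finset.Icc_subset_Icc_right hab) (fun s _ _ => sq_nonneg _)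
  have hGpd : ∀ t, d ≤ t → (G t).PosDef := by
    intro t ht
    refine .of_dotProduct_mulVec_pos (hGherm t) fun x hx => ?_
    rw [hstar]
    have hxpos : 0 < ∑ i, x i ^ 2 := by
      rcases Function.ne_iff.1 hx with ⟨i, hi⟩
      refine Finset.sum_pos' (fun j _ => sq_nonneg _) ⟨i, Finset.mem_univ i, pow_pos (abs_pos.2 hi) 2 |>.trans_eq (sq_abs _)⟩
    calc (0:ℝ) < ∑ i, x i ^ 2 := hxpos
      _ ≤ x ⬝ᵥ (G d).mulVec x := hGd_ge x
      _ ≤ x ⬝ᵥ (G t).mulVec x := hmono d t ht x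
  have hw0 : ∀ t, d ≤ t → 0 ≤ X t ⬝ᵥ (G t)⁻¹.mulVec (X t) := by
    intro t ht
    have := ((hGpd t ht).inv).posSemidef.dotProduct_mulVec_nonneg (X t)
    rwa [hstar] at this
  -- one-step determinant identity
  have hGsucc : ∀ t : ℕ, 1 ≤ t → G t = G (t-1) + vecMulVec (X t) (X t) := by
    intro t ht
    obtain ⟨m, rfl⟩ : ∃ m, t = m + 1 := ⟨t - 1, (Nat.succ_pred_eq_of_pos ht).symm⟩
    rw [hGdef, hGdef, Finset.sum_Icc_succ_top (by omega)]
    simp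
  have hdet : ∀ t, d + 1 ≤ t →
      (G (t-1)).det = (G t).det * (1 - X t ⬝ᵥ (G t)⁻¹.mulVec (X t)) := by
    intro t ht
    have hA := hGpd t (by omega)
    have hAd : IsUnit (G t).det := (ne_of_gt hA.det_pos).isUnit
    have hB : G (t-1) = G t + replicateCol Unit (-(X t)) * replicateRow Unit (X t) := by
      have h1 := hGsucc t (by omega)
      have : vecMulVec (X t) (X t) = replicateCol Unit (X t) * replicateRow Unit (X t) := vecMulVec_eq Unit _ _
      rw [this] at h1
      have hcol : replicateCol Unit (-(X t)) = -replicateCol Unit (X t) := by ext i j; simp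
      rw [hcol]
      rw [h1, Matrix.neg_mul]
      abel
    rw [hB, det_add_replicateCol_mul_replicateRow hAd]
    congr 1
    rw [det_unique]
    have hassoc : replicateRow Unit (X t) * (G t)⁻¹ * replicateCol Unit (-(X t))
        = replicateRow Unit (X t) * replicateCol Unit ((G t)⁻¹ *ᵥ (-(X t))) := by
      rw [replicateCol_mulVec, Matrix.mul_assoc]
    rw [Matrix.add_apply, Matrix.one_apply_eq, hassoc, replicateRow_mul_replicateCol_apply,
      mulVec_neg, dotProduct_neg]
    ring
  -- one-step log bound
  have hstep : ∀ t, d + 1 ≤ t →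
      X t ⬝ᵥ (G t)⁻¹.mulVec (X t) ≤ Real.log (G t).det - Real.log (G (t-1)).det := by
    intro t ht
    have hdetA := (hGpd t (by omega)).det_pos
    have hdetB := (hGpd (t-1) (by omega)).det_pos
    have hr : (0:ℝ) < (G (t-1)).det / (G t).det := div_pos hdetB hdetA
    have hlog := Real.log_le_sub_one_of_pos hr
    rw [Real.log_div (ne_of_gt hdetB) (ne_of_gt hdetA)] at hlog
    have hrr : (G (t-1)).det / (G t).det = 1 - X t ⬝ᵥ (G t)⁻¹.mulVec (X t) := by
      rw [hdet t ht]
      field_simp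
    rw [hrr] at hlog
    linarith
  -- telescoping
  have htel : ∀ m, d ≤ m → ∑ t ∈ Finset.Icc (d+1) m, X t ⬝ᵥ (G t)⁻¹.mulVec (X t)
      ≤ Real.log (G m).det - Real.log (G d).det := by
    intro m hm
    induction m with
    | zero => omega
    | succ m ih =>
      rcases Nat.lt_or_ge m d with h | h
      · have hmd : m + 1 = d := by omega
        rw [Finset.Icc_eq_empty (by omega), Finset.sum_empty, hmd, sub_self]
      · rw [Finset.sum_Icc_succ_top (by omega)]
        have hs := hstep (m+1) (by omega)
        simp only [Nat.add_sub_cancel] at hs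
        have := ih h
        linarith
  -- determinant bounds
  have hdetGd : 1 ≤ (G d).det := by
    have hh := hGherm d
    rw [hh.det_eq_prod_eigenvalues]

    calc (1:ℝ) = ∏ _i : Fin d, 1 := by simp
      _ ≤ ∏ i, hh.eigenvalues i := by
        refine Finset.prod_le_prod (fun i _ => zero_le_one) fun i _ => ?_
        rw [hh.eigenvalues_eq]
        have hv := hh.eigenvectorBasis.orthonormal.1 i
        set v : Fin d → ℝ := ⇑(hh.eigenvectorBasis i) with hv_def
        have hnorm : ∑ j, v j ^ 2 = 1 := by
          have := EuclideanSpace.norm_eq (hh.eigenvectorBasis i)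
          rw [hv] at this
          have h2 : Real.sqrt (∑ j, ‖v j‖ ^ 2) = 1 := this.symm
          have h3 : ∑ j, ‖v j‖ ^ 2 = 1 := by
            have hnn : 0 ≤ ∑ j, ‖v j‖ ^ 2 := Finset.sum_nonneg fun j _ => sq_nonneg _
            nlinarith [Real.sq_sqrt hnn]
          simpa [Real.norm_eq_abs, sq_abs] using h3
        have := hGd_ge v
        rw [hnorm] at this
        simpa [hstar] using this
  -- trace bound
  have hXsq : ∀ s, ∑ i, (X s i) ^ 2 ≤ 1 := by
    intro s
    have h0 : 0 ≤ ∑ i, (X s i) ^ 2 := Finset.sum_nonneg fun i _ => sq_nonneg _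
    nlinarith [hX s, Real.sq_sqrt h0, Real.sqrt_nonneg (∑ i, (X s i) ^ 2)]
  have htr : (G n).trace ≤ (n : ℝ) := by
    rw [hGdef, Matrix.trace_sum]
    calc ∑ s ∈ Finset.Icc 1 n, (vecMulVec (X s) (X s)).trace
        ≤ ∑ _s ∈ Finset.Icc 1 n, (1:ℝ) := by
          refine Finset.sum_le_sum fun s _ => ?_
          have : (vecMulVec (X s) (X s)).trace = ∑ i, (X s i) ^ 2 := by
            simp [Matrix.trace, Matrix.diag, vecMulVec_apply, sq]
          rw [this]; exact hXsq s
      _ = (n : ℝ) := by simp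
  have hermn := hGherm n
  have hsum_eig : ∑ i, hermn.eigenvalues i = (G n).trace := by
    simp [hermn.trace_eq_sum_eigenvalues]
  have heig_nonneg : ∀ i, 0 ≤ hermn.eigenvalues i := fun i =>
    (hGpd n (le_of_lt hn)).posSemidef.eigenvalues_nonneg i
  have hdetGn : (G n).det ≤ (((d:ℝ) + n) / d) ^ d := by
    have hdpos : (0:ℝ) < d := by exact_mod_cast hd
    have hgm := Real.geom_mean_le_arith_mean_weighted Finset.univ
      (fun _ => 1 / (d:ℝ)) hermn.eigenvalues
      (fun i _ => by positivity) (by simp; field_simp)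
      (fun i _ => heig_nonneg i)
    have hkey : (∏ i, hermn.eigenvalues i ^ (1 / (d:ℝ))) ^ d = ∏ i, hermn.eigenvalues i := by
      rw [← Finset.prod_pow]
      refine Finset.prod_congr rfl fun i _ => ?_
      rw [← Real.rpow_natCast (hermn.eigenvalues i ^ (1/(d:ℝ))) d,
        ← Real.rpow_mul (heig_nonneg i)]
      rw [one_div, inv_mul_cancel₀ (ne_of_gt hdpos), Real.rpow_one]
    have harith : ∑ i, (1/(d:ℝ)) * hermn.eigenvalues i = (G n).trace / d := by
      rw [← Finset.mul_sum, hsum_eig]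
      ring
    rw [harith] at hgm
    have hgnn : 0 ≤ ∏ i, hermn.eigenvalues i ^ (1 / (d:ℝ)) :=
      Finset.prod_nonneg fun i _ => Real.rpow_nonneg (heig_nonneg i) _
    have h1 : (G n).det = ∏ i, hermn.eigenvalues i := by
      rw [hermn.det_eq_prod_eigenvalues]; push_cast; rfl
    rw [h1, ← hkey]
    calc (∏ i, hermn.eigenvalues i ^ (1 / (d:ℝ))) ^ d ≤ ((G n).trace / d) ^ d :=
        pow_le_pow_left₀ hgnn hgm d
      _ ≤ (((d:ℝ) + n) / d) ^ d := by
        have h2 : (G n).trace ≤ (d:ℝ) + n := by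
          have : (0:ℝ) ≤ d := le_of_lt hdpos
          linarith
        have h0 : 0 ≤ (G n).trace := by
          rw [← hsum_eig]
          exact Finset.sum_nonneg fun i _ => heig_nonneg i
        gcongr
  -- combine
  have hdpos : (0:ℝ) < d := by exact_mod_cast hd
  have hnd : (d:ℝ) ≤ n := by exact_mod_cast le_of_lt hn
  have hL0 : 0 ≤ Real.log (((d:ℝ) + n) / d) :=
    Real.log_nonneg (by rw [le_div_iff₀ hdpos]; linarith)
  have hlogdet : Real.log (G n).det - Real.log (G d).det
      ≤ (d:ℝ) * Real.log (((d:ℝ) + n) / d) := by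
    have hdn0 : (0:ℝ) < (((d:ℝ) + n) / d) ^ d := by positivity
    have h1 : Real.log (G n).det ≤ Real.log ((((d:ℝ) + n) / d) ^ d) :=
      (Real.log_le_log_iff (hGpd n (le_of_lt hn)).det_pos hdn0).2 hdetGn
    rw [Real.log_pow] at h1
    have h2 : 0 ≤ Real.log (G d).det := Real.log_nonneg hdetGd
    push_cast at h1
    linarith
  have hsumw := le_trans (htel n (le_of_lt hn)) hlogdet
  have hsumw0 : 0 ≤ ∑ t ∈ Finset.Icc (d+1) n, X t ⬝ᵥ (G t)⁻¹.mulVec (X t) :=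
    Finset.sum_nonneg fun t htm => hw0 t (by have := Finset.mem_Icc.1 htm; omega)
  have hcard : (((Finset.Icc (d+1) n).card : ℕ) : ℝ) ≤ 2 * n := by
    have h1 : (Finset.Icc (d+1) n).card ≤ 2 * n := by
      rw [Nat.card_Icc]; omega
    exact_mod_cast h1
  have hCS := sq_sum_le_card_mul_sum_sq (s := Finset.Icc (d+1) n)
    (f := fun t => Real.sqrt (X t ⬝ᵥ (G t)⁻¹.mulVec (X t)))
  have hsq : ∑ t ∈ Finset.Icc (d+1) n, Real.sqrt (X t ⬝ᵥ (G t)⁻¹.mulVec (X t)) ^ 2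
      = ∑ t ∈ Finset.Icc (d+1) n, X t ⬝ᵥ (G t)⁻¹.mulVec (X t) := by
    refine Finset.sum_congr rfl fun t htm => ?_
    exact Real.sq_sqrt (hw0 t (by have := Finset.mem_Icc.1 htm; omega))
  rw [hsq] at hCS
  have hfin : (∑ t ∈ Finset.Icc (d+1) n, Real.sqrt (X t ⬝ᵥ (G t)⁻¹.mulVec (X t))) ^ 2
      ≤ 2 * n * d * Real.log (((d:ℝ) + n) / d) := by
    have hcard0 : (0:ℝ) ≤ ((Finset.Icc (d+1) n).card : ℝ) := Nat.cast_nonneg _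
    have hdl0 : 0 ≤ (d:ℝ) * Real.log (((d:ℝ) + n) / d) := by positivity
    nlinarith [hCS]
  have hnn : 0 ≤ ∑ t ∈ Finset.Icc (d+1) n, Real.sqrt (X t ⬝ᵥ (G t)⁻¹.mulVec (X t)) :=
    Finset.sum_nonneg fun t _ => Real.sqrt_nonneg _
  calc ∑ t ∈ Finset.Icc (d+1) n, Real.sqrt (X t ⬝ᵥ (G t)⁻¹.mulVec (X t))
      = Real.sqrt ((∑ t ∈ Finset.Icc (d+1) n,
          Real.sqrt (X t ⬝ᵥ (G t)⁻¹.mulVec (X t))) ^ 2) := (Real.sqrt_sq hnn).symm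
    _ ≤ Real.sqrt (2 * n * d * Real.log (((d:ℝ) + n) / d)) := Real.sqrt_le_sqrt hfin
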